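/- Let d ≥ 2 and let V be a finite set with |V| ≥ d+1. Let 𝓛 be a nonempty family of subsets of V such that |L| ∈ {d, d+1, |V|−1} for every L ∈ 𝓛. Then the complex (V, ∪_{L ∈ 𝓛} B_d(V,L)) is boolean representable. -/

import Mathlib

open scoped Classical

variable {V : Type*}

/-- A (finite) simplicial complex on vertex set `V`: all singletons are faces and
faces are closed under taking subsets. -/
def IsSimplicialComplex [DecidableEq V] (H : Set (Finset V)) : Prop :=
  (∀ v : V, {v} ∈ H) ∧ ∀ X ∈ H, ∀ Y ⊆ X, Y ∈ H

/-- `F` is a flat of the complex with faces `H`. -/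
def IsFlat [DecidableEq V] (H : Set (Finset V)) (F : Finset V) : Prop :=
  ∀ I ∈ H, I ⊆ F → ∀ p ∉ F, insert p I ∈ H

/-- `X` is a facet (maximal face) of `H`. -/
def IsFacet (H : Set (Finset V)) (X : Finset V) : Prop :=
  X ∈ H ∧ ∀ Y ∈ H, X ⊆ Y → Y = X

/-- The `k`-truncation of the family of faces `H`. -/
def trunc (H : Set (Finset V)) (k : ℕ) : Set (Finset V) :=
  {X ∈ H | X.card ≤ k}

/-- `H` has dimension `d`: some face has `d+1` elements and all faces have at most `d+1`. -/
def HasDim (H : Set (Finset V)) (d : ℕ) : Prop :=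
  (∃ X ∈ H, X.card = d + 1) ∧ ∀ X ∈ H, X.card ≤ d + 1

/-- `H` is paving of dimension `d`: every `d`-subset is a face and the maximal face
cardinality is `d+1`. -/
def PavingDim (H : Set (Finset V)) (d : ℕ) : Prop :=
  (∀ X : Finset V, X.card = d → X ∈ H) ∧ (∃ X ∈ H, X.card = d + 1) ∧
    ∀ X ∈ H, X.card ≤ d + 1

/-- `X` is a transversal of the successive differences for a chain
`C 0 ⊆ C 1 ⊆ … ⊆ C k` in the family `F`, i.e. `X` enumerates as `x 0, …, x (k-1)`
with `x i ∈ C (i+1) \ C i`. -/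
def Transversal [DecidableEq V] (F : Set (Finset V)) (X : Finset V) : Prop :=
  ∃ (k : ℕ) (x : Fin k → V) (C : Fin (k + 1) → Finset V),
    Function.Injective x ∧
    X = Finset.image x Finset.univ ∧
    (∀ i, C i ∈ F) ∧
    (∀ i : Fin k, C i.castSucc ⊆ C i.succ) ∧
    (∀ i : Fin k, x i ∈ C i.succ ∧ x i ∉ C i.castSucc)

/-- The set of all transversals of the successive differences for chains in `F`. -/
def Tr [DecidableEq V] (F : Set (Finset V)) : Set (Finset V) :=
  {X | Transversal F X}

/-- `H` is boolean representable: its faces are exactly the transversals of the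
successive differences for chains in its lattice of flats. -/
def BooleanRepresentable [DecidableEq V] (H : Set (Finset V)) : Prop :=
  H = Tr {F | IsFlat H F}

/-- The family `ε(S)` for a complex of dimension `d`. -/
def eps [DecidableEq V] (H : Set (Finset V)) (d : ℕ) : Set (Finset V) :=
  {X | ∀ Y ∈ H, Y ⊆ X → Y.card ≤ d → ∀ p ∉ X, insert p Y ∈ H}

/-- `H` is a truncated boolean representable simplicial complex. -/
def IsTBRSC [DecidableEq V] (H : Set (Finset V)) : Prop :=
  ∃ (H' : Set (Finset V)) (k : ℕ), 1 ≤ k ∧ IsSimplicialComplex H' ∧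
    BooleanRepresentable H' ∧ H = trunc H' k

/-- The complex `B_d(V,L)`. -/
def Bd [DecidableEq V] (d : ℕ) (L : Finset V) : Set (Finset V) :=
  {X | X.card ≤ d} ∪ {X | X.card = d + 1 ∧ (X ∩ L).card = d}

/-- The closure of `X`: the intersection of all flats containing `X`. -/
noncomputable def cl [Fintype V] [DecidableEq V] (H : Set (Finset V)) (X : Finset V) :
    Finset V :=
  Finset.univ.filter fun v => ∀ F : Finset V, IsFlat H F → X ⊆ F → v ∈ F

/-- `H` is a near-matroid. -/
def NearMatroid [Fintype V] [DecidableEq V] (H : Set (Finset V)) : Prop :=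
  ∀ X ∈ H, ∀ Y ∈ H, cl H X = cl H Y → cl H X ≠ Finset.univ → X.card = Y.card

/-- `H` is a matroid: a simplicial complex with the exchange property. -/
def IsMatroid [DecidableEq V] (H : Set (Finset V)) : Prop :=
  IsSimplicialComplex H ∧
    ∀ I ∈ H, ∀ J ∈ H, I.card = J.card + 1 → ∃ i ∈ I, i ∉ J ∧ insert i J ∈ H

namespace BdAux

variable [DecidableEq V]

/-- The union complex. -/
def Hc (d : ℕ) (𝓛 : Set (Finset V)) : Set (Finset V) :=
  {X : Finset V | ∃ L ∈ 𝓛, X ∈ Bd d L}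

variable {d : ℕ} {𝓛 : Set (Finset V)}

lemma mem_Bd {L X : Finset V} :
    X ∈ Bd d L ↔ X.card ≤ d ∨ (X.card = d + 1 ∧ (X ∩ L).card = d) := Iff.rfl

lemma small_mem (hne : 𝓛.Nonempty) {X : Finset V} (h : X.card ≤ d) : X ∈ Hc d 𝓛 := by
  obtain ⟨L, hL⟩ := hne
  exact ⟨L, hL, Or.inl h⟩

lemma card_le {X : Finset V} (hX : X ∈ Hc d 𝓛) : X.card ≤ d + 1 := by
  obtain ⟨L, _, h⟩ := hX
  rcases mem_Bd.1 h with h | h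
  · omega
  · omega

lemma flat_univ [Fintype V] : IsFlat (Hc d 𝓛) (Finset.univ : Finset V) := by
  intro I _ _ p hp
  exact absurd (Finset.mem_univ p) hp

lemma flat_small (hne : 𝓛.Nonempty) {F : Finset V} (h : F.card + 1 ≤ d) :
    IsFlat (Hc d 𝓛) F := by
  intro I _ hIF p _
  apply small_mem hne
  have h1 : (insert p I).card ≤ I.card + 1 := Finset.card_insert_le _ _
  have h2 : I.card ≤ F.card := Finset.card_le_card hIF
  omega

/-! ### Prefix sets of an enumeration -/

/-- The set of the first `n` values of `x`. -/
def pre {m : ℕ} (x : Fin m → V) (n : ℕ) : Finset V :=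
  (Finset.univ.filter fun j : Fin m => (j : ℕ) < n).image x

lemma mem_pre {m : ℕ} {x : Fin m → V} {n : ℕ} {v : V} :
    v ∈ pre x n ↔ ∃ j : Fin m, (j : ℕ) < n ∧ x j = v := by
  simp [pre]

lemma pre_zero {m : ℕ} (x : Fin m → V) : pre x 0 = ∅ := by
  simp [pre]

lemma pre_mono {m : ℕ} (x : Fin m → V) (n : ℕ) : pre x n ⊆ pre x (n + 1) := by
  intro v hv
  rw [mem_pre] at hv ⊢
  obtain ⟨j, hj, hjv⟩ := hv
  exact ⟨j, by omega, hjv⟩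

lemma pre_succ {m : ℕ} (x : Fin m → V) {n : ℕ} (hn : n < m) :
    pre x (n + 1) = insert (x ⟨n, hn⟩) (pre x n) := by
  ext v
  rw [mem_pre, Finset.mem_insert, mem_pre]
  constructor
  · rintro ⟨j, hj, rfl⟩
    rcases Nat.lt_or_ge (j : ℕ) n with h | h
    · exact Or.inr ⟨j, h, rfl⟩
    · have : (j : ℕ) = n := by omega
      left
      congr 1
      exact Fin.ext this
  · rintro (h | ⟨j, hj, rfl⟩)
    · exact ⟨⟨n, hn⟩, by simp, h.symm⟩
    · exact ⟨j, by omega, rfl⟩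

lemma pre_top {m : ℕ} (x : Fin m → V) : pre x m = Finset.image x Finset.univ := by
  unfold pre
  congr 1
  ext j
  simp [j.isLt]

lemma pre_card_le {m : ℕ} (x : Fin m → V) (n : ℕ) : (pre x n).card ≤ n := by
  refine le_trans (Finset.card_image_le) ?_
  calc (Finset.univ.filter fun j : Fin m => (j : ℕ) < n).card
      ≤ (Finset.range n).card := by
        refine Finset.card_le_card_of_injOn (fun j => (j : ℕ)) ?_ ?_
        · intro a ha
          simp only [Finset.mem_coe, Finset.mem_filter] at ha
          exact Finset.mem_range.2 ha.2
        · intro a _ b _ h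
          exact Fin.ext h
    _ = n := Finset.card_range n

lemma not_mem_pre {m : ℕ} {x : Fin m → V} (hx : Function.Injective x) {n : ℕ}
    {j : Fin m} (hj : n ≤ (j : ℕ)) : x j ∉ pre x n := by
  rw [mem_pre]
  rintro ⟨j', hj', hj'eq⟩
  have := hx hj'eq
  subst this
  omega

/-! ### Transversals are faces -/

lemma tr_subset (hne : 𝓛.Nonempty) :
    Tr {F | IsFlat (Hc d 𝓛) F} ⊆ Hc d 𝓛 := by
  intro X hX
  obtain ⟨k, x, C, hinj, hXeq, hCF, hchain, hx⟩ := hX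
  have key : ∀ n, ∀ hn : n ≤ k,
      pre x n ∈ Hc d 𝓛 ∧ pre x n ⊆ C ⟨n, Nat.lt_succ_of_le hn⟩ := by
    intro n
    induction n with
    | zero =>
      intro hn
      rw [pre_zero]
      exact ⟨small_mem hne (by simp), Finset.empty_subset _⟩
    | succ n ih =>
      intro hn
      have hnk : n < k := hn
      obtain ⟨ihH, ihC⟩ := ih (Nat.le_of_lt hnk)
      set i : Fin k := ⟨n, hnk⟩ with hi
      have hcs : i.castSucc = (⟨n, Nat.lt_succ_of_le (Nat.le_of_lt hnk)⟩ : Fin (k + 1)) := by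
        ext; simp [hi]
      have hss : i.succ = (⟨n + 1, Nat.lt_succ_of_le hn⟩ : Fin (k + 1)) := by
        ext; simp [hi]
      have hsub : pre x n ⊆ C i.castSucc := by rw [hcs]; exact ihC
      have hxmem := hx i
      have hflat : IsFlat (Hc d 𝓛) (C i.castSucc) := hCF i.castSucc
      have hmem : insert (x i) (pre x n) ∈ Hc d 𝓛 :=
        hflat _ ihH hsub _ hxmem.2
      rw [pre_succ x hnk]
      constructor
      · exact hmem
      · rw [← hss]
        intro v hv
        rcases Finset.mem_insert.1 hv with rfl | hv
        · exact hxmem.1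
        · exact hchain i (hsub hv)
  have := (key k le_rfl).1
  rwa [pre_top, ← hXeq] at this

/-! ### Building transversals -/

lemma empty_tr [Fintype V] : Transversal {F | IsFlat (Hc d 𝓛) F} (∅ : Finset V) := by
  refine ⟨0, Fin.elim0, fun _ => Finset.univ, ?_, ?_, ?_, ?_, ?_⟩
  · intro a; exact a.elim0
  · simp
  · intro _; exact flat_univ
  · intro i; exact i.elim0
  · intro i; exact i.elim0

lemma build [Fintype V] (hne : 𝓛.Nonempty) {X : Finset V} {p : V} {F : Finset V}
    (hXc : X.card ≤ d + 1) (hp : p ∈ X) (hF : IsFlat (Hc d 𝓛) F)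
    (hXF : X.erase p ⊆ F) (hpF : p ∉ F) :
    Transversal {F | IsFlat (Hc d 𝓛) F} X := by
  set m := (X.erase p).card with hm
  have hm1 : m + 1 = X.card := Finset.card_erase_add_one hp
  -- enumeration of `X.erase p`
  set e : Fin m → V := fun j => ((X.erase p).equivFin.symm j : V) with he
  have heinj : Function.Injective e := by
    intro a b hab
    exact (X.erase p).equivFin.symm.injective (Subtype.ext hab)
  have hemem : ∀ j, e j ∈ X.erase p := fun j => ((X.erase p).equivFin.symm j).2
  have hesurj : ∀ a ∈ X.erase p, ∃ j, e j = a := by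
    intro a ha
    exact ⟨(X.erase p).equivFin ⟨a, ha⟩, by simp [he]⟩
  have henp : ∀ j, e j ≠ p := fun j => Finset.ne_of_mem_erase (hemem j)
  -- the enumeration of X, with p last
  set x : Fin (m + 1) → V :=
    fun i => if h : (i : ℕ) < m then e ⟨(i : ℕ), h⟩ else p with hxdef
  have hxlt : ∀ (i : Fin (m + 1)) (h : (i : ℕ) < m), x i = e ⟨(i : ℕ), h⟩ := by
    intro i h; simp [hxdef, h]
  have hxlast : ∀ (i : Fin (m + 1)), (i : ℕ) = m → x i = p := by
    intro i h; simp [hxdef, h]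
  -- the chain
  set C : Fin (m + 2) → Finset V :=
    fun a => if (a : ℕ) < m then pre e (a : ℕ)
      else if (a : ℕ) = m then F else Finset.univ with hCdef
  have hpreF : ∀ n, n ≤ m → pre e n ⊆ F := by
    intro n hn v hv
    apply hXF
    rw [mem_pre] at hv
    obtain ⟨j, _, rfl⟩ := hv
    exact hemem j
  refine ⟨m + 1, x, C, ?_, ?_, ?_, ?_, ?_⟩
  · -- injectivity
    intro a b hab
    by_cases ha : (a : ℕ) < m <;> by_cases hb : (b : ℕ) < m
    · rw [hxlt a ha, hxlt b hb] at hab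
      have h3 : (⟨(a : ℕ), ha⟩ : Fin m) = ⟨(b : ℕ), hb⟩ := heinj hab
      have h2 : (a : ℕ) = (b : ℕ) := congrArg (fun t : Fin m => (t : ℕ)) h3
      exact Fin.ext h2
    · rw [hxlt a ha, hxlast b (by omega)] at hab
      exact absurd hab (henp _)
    · rw [hxlast a (by omega), hxlt b hb] at hab
      exact absurd hab.symm (henp _)
    · exact Fin.ext (by omega)
  · -- X is the image
    ext v
    simp only [Finset.mem_image, Finset.mem_univ, true_and]
    constructor
    · intro hv
      by_cases hvp : v = p
      · exact ⟨⟨m, by omega⟩, by rw [hxlast _ rfl, hvp]⟩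
      · obtain ⟨j, hj⟩ := hesurj v (Finset.mem_erase.2 ⟨hvp, hv⟩)
        refine ⟨⟨(j : ℕ), by omega⟩, ?_⟩
        rw [hxlt _ (j.isLt), ← hj]
    · rintro ⟨i, rfl⟩
      by_cases hi : (i : ℕ) < m
      · rw [hxlt i hi]
        exact Finset.mem_of_mem_erase (hemem _)
      · rw [hxlast i (by omega)]
        exact hp
  · -- all chain members are flats
    intro a
    simp only [hCdef, Set.mem_setOf_eq]
    split_ifs with h1 h2
    · apply flat_small hne
      have := pre_card_le e (a : ℕ)
      omega
    · exact hF
    · exact flat_univ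
  · -- the chain is increasing
    intro i
    simp only [hCdef, Fin.coe_castSucc, Fin.val_succ]
    split_ifs <;>
      first
        | exact pre_mono e _
        | exact hpreF _ (by omega)
        | exact Finset.subset_univ _
        | exact Finset.Subset.refl _
        | omega
        | exact absurd rfl (by omega)
  · -- transversal property
    intro i
    simp only [hCdef, Fin.coe_castSucc, Fin.val_succ]
    by_cases hi : (i : ℕ) < m
    · rw [hxlt i hi]
      constructor
      · split_ifs <;>
          first
            | (rw [mem_pre]; exact ⟨⟨(i : ℕ), hi⟩, Nat.lt_succ_self _, rfl⟩)
            | exact hXF (hemem _)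
            | exact Finset.mem_univ _
      · split_ifs <;>
          first
            | exact not_mem_pre heinj (le_refl _)
            | exact fun _ => by omega
    · have him : (i : ℕ) = m := by omega
      rw [hxlast i him]
      constructor
      · split_ifs <;>
          first
            | exact Finset.mem_univ _
            | exact absurd him (by omega)
            | exact absurd rfl (by omega)
      · split_ifs <;>
          first
            | exact hpF
            | exact fun _ => by omega

/-! ### The crux: separating flats for faces of maximal dimension -/

lemma crux [Fintype V] (hd : 2 ≤ d) (hV : d + 1 ≤ Fintype.card V)
    (hcard : ∀ L ∈ 𝓛, L.card = d ∨ L.card = d + 1 ∨ L.card = Fintype.card V - 1)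
    {X : Finset V} (hX : X ∈ Hc d 𝓛) (hXc : X.card = d + 1) :
    ∃ p ∈ X, ∃ F, IsFlat (Hc d 𝓛) F ∧ X.erase p ⊆ F ∧ p ∉ F := by
  obtain ⟨L, hL, hbd⟩ := hX
  rcases mem_Bd.1 hbd with h | ⟨_, hXL⟩
  · omega
  have hsd : (X ∩ L).card + (X \ L).card = X.card := Finset.card_inter_add_card_sdiff X L
  have hXdiff : (X \ L).card = 1 := by omega
  rcases hcard L hL with hLc | hLc | hLc
  · -- |L| = d
    obtain ⟨p, hpd⟩ := Finset.card_eq_one.1 hXdiff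
    have hpX : p ∈ X \ L := by rw [hpd]; exact Finset.mem_singleton_self p
    have hpX' : p ∈ X := (Finset.mem_sdiff.1 hpX).1
    have hpL : p ∉ L := (Finset.mem_sdiff.1 hpX).2
    refine ⟨p, hpX', L, ?_, ?_, hpL⟩
    · -- L is a flat
      intro I hI hIL p' hp'
      have hIcard : I.card ≤ d := hLc ▸ Finset.card_le_card hIL
      by_cases hId : I.card = d
      · have hIeq : I = L := Finset.eq_of_subset_of_card_le hIL (by omega)
        rw [hIeq]
        refine ⟨L, hL, Or.inr ⟨?_, ?_⟩⟩
        · rw [Finset.card_insert_of_notMem hp']; omega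
        · have h5 : insert p' L ∩ L = L := Finset.inter_eq_right.2 (Finset.subset_insert _ _)
          rw [h5]; omega
      · apply small_mem ⟨L, hL⟩
        have := Finset.card_insert_le p' I
        omega
    · -- X.erase p ⊆ L
      intro a ha
      obtain ⟨hap, haX⟩ := Finset.mem_erase.1 ha
      by_contra haL
      have : a ∈ X \ L := Finset.mem_sdiff.2 ⟨haX, haL⟩
      rw [hpd, Finset.mem_singleton] at this
      exact hap this
  · -- |L| = d + 1
    obtain ⟨p, hpd⟩ := Finset.card_eq_one.1 hXdiff
    have hpX : p ∈ X \ L := by rw [hpd]; exact Finset.mem_singleton_self p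
    have hpX' : p ∈ X := (Finset.mem_sdiff.1 hpX).1
    have hpL : p ∉ L := (Finset.mem_sdiff.1 hpX).2
    have herase : X.erase p ⊆ X ∩ L := by
      intro a ha
      obtain ⟨hap, haX⟩ := Finset.mem_erase.1 ha
      refine Finset.mem_inter.2 ⟨haX, ?_⟩
      by_contra haL
      have : a ∈ X \ L := Finset.mem_sdiff.2 ⟨haX, haL⟩
      rw [hpd, Finset.mem_singleton] at this
      exact hap this
    by_cases hLH : L ∈ Hc d 𝓛
    · -- F = X ∩ L
      refine ⟨p, hpX', X ∩ L, ?_, herase, ?_⟩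
      · intro I hI hIF p' hp'
        have hIcard : I.card ≤ d := hXL ▸ Finset.card_le_card hIF
        by_cases hId : I.card = d
        · have hIeq : I = X ∩ L := Finset.eq_of_subset_of_card_le hIF (by omega)
          rw [hIeq]
          rw [hIeq] at hId
          by_cases hp'L : p' ∈ L
          · have hsub : insert p' (X ∩ L) ⊆ L :=
              Finset.insert_subset hp'L Finset.inter_subset_right
            have hcardins : (insert p' (X ∩ L)).card = d + 1 := by
              rw [Finset.card_insert_of_notMem hp']; omega
            have heq : insert p' (X ∩ L) = L :=
              Finset.eq_of_subset_of_card_le hsub (by omega)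
            rw [heq]; exact hLH
          · refine ⟨L, hL, Or.inr ⟨?_, ?_⟩⟩
            · rw [Finset.card_insert_of_notMem hp']; omega
            · rw [Finset.insert_inter_of_notMem hp'L,
                Finset.inter_eq_left.2 (Finset.inter_subset_right : X ∩ L ⊆ L)]
              omega
        · apply small_mem ⟨L, hL⟩
          have := Finset.card_insert_le p' I
          omega
      · intro hmem
        exact hpL (Finset.mem_inter.1 hmem).2
    · -- F = L
      refine ⟨p, hpX', L, ?_, fun a ha => (Finset.mem_inter.1 (herase ha)).2, hpL⟩
      intro I hI hIL p' hp'
      have hIcard : I.card ≤ d + 1 := hLc ▸ Finset.card_le_card hIL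
      by_cases hId1 : I.card = d + 1
      · have : I = L := Finset.eq_of_subset_of_card_le hIL (by omega)
        subst this
        exact absurd hI hLH
      by_cases hId : I.card = d
      · refine ⟨L, hL, Or.inr ⟨?_, ?_⟩⟩
        · have hp'I : p' ∉ I := fun h => hp' (hIL h)
          rw [Finset.card_insert_of_notMem hp'I]; omega
        · rw [Finset.insert_inter_of_notMem hp']
          have : I ∩ L = I := Finset.inter_eq_left.2 hIL
          rw [this]; omega
      · apply small_mem ⟨L, hL⟩
        have := Finset.card_insert_le p' I
        omega
  · -- |L| = |V| - 1
    have hVpos : 1 ≤ Fintype.card V := by omega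
    have hcompl : (Lᶜ : Finset V).card = 1 := by
      rw [Finset.card_compl]; omega
    obtain ⟨q, hq⟩ := Finset.card_eq_one.1 hcompl
    have hqiff : ∀ a : V, a ∉ L ↔ a = q := by
      intro a
      rw [← Finset.mem_compl, hq, Finset.mem_singleton]
    -- q ∈ X
    have hqX : q ∈ X := by
      obtain ⟨q', hq'⟩ := Finset.card_eq_one.1 hXdiff
      have hq'mem : q' ∈ X \ L := by rw [hq']; exact Finset.mem_singleton_self q'
      have : q' = q := (hqiff q').1 (Finset.mem_sdiff.1 hq'mem).2
      exact this ▸ (Finset.mem_sdiff.1 hq'mem).1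
    -- pick p ∈ X ∩ L
    have hXLne : (X ∩ L).Nonempty := by
      rw [← Finset.card_pos]; omega
    obtain ⟨p, hpXL⟩ := hXLne
    have hpX : p ∈ X := (Finset.mem_inter.1 hpXL).1
    have hpL : p ∈ L := (Finset.mem_inter.1 hpXL).2
    have hpq : p ≠ q := fun h => ((hqiff p).2 h) hpL
    refine ⟨p, hpX, X.erase p, ?_, Finset.Subset.refl _, Finset.notMem_erase _ _⟩
    have hqF : q ∈ X.erase p := Finset.mem_erase.2 ⟨fun h => hpq h.symm, hqX⟩
    have hFcard : (X.erase p).card = d := by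
      have := Finset.card_erase_add_one hpX
      omega
    intro I hI hIF p' hp'
    have hIcard : I.card ≤ d := hFcard ▸ Finset.card_le_card hIF
    by_cases hId : I.card = d
    · have hIeq : I = X.erase p := Finset.eq_of_subset_of_card_le hIF (by omega)
      have hp'I : p' ∉ I := fun h => hp' (hIF h)
      have hp'q : p' ≠ q := fun h => hp' (h ▸ hqF)
      have hqI : q ∈ I := hIeq ▸ hqF
      refine ⟨L, hL, Or.inr ⟨?_, ?_⟩⟩
      · rw [Finset.card_insert_of_notMem hp'I]; omega
      · have hinter : insert p' I ∩ L = (insert p' I).erase q := by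
          ext a
          rw [Finset.mem_inter, Finset.mem_erase]
          constructor
          · rintro ⟨ha1, ha2⟩
            exact ⟨fun h => ((hqiff a).2 h) ha2, ha1⟩
          · rintro ⟨ha1, ha2⟩
            refine ⟨ha2, ?_⟩
            by_contra haL
            exact ha1 ((hqiff a).1 haL)
        rw [hinter, Finset.card_erase_of_mem (Finset.mem_insert_of_mem hqI),
          Finset.card_insert_of_notMem hp'I]
        omega
    · apply small_mem ⟨L, hL⟩
      have := Finset.card_insert_le p' I
      omega

end BdAux

theorem stmt_15 [Fintype V] [DecidableEq V] [Nonempty V] (d : ℕ) (hd : 2 ≤ d)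
    (hV : d + 1 ≤ Fintype.card V) (𝓛 : Set (Finset V)) (hne : 𝓛.Nonempty)
    (hcard : ∀ L ∈ 𝓛, L.card = d ∨ L.card = d + 1 ∨ L.card = Fintype.card V - 1) :
    BooleanRepresentable {X : Finset V | ∃ L ∈ 𝓛, X ∈ Bd d L} := by
  show BooleanRepresentable (BdAux.Hc d 𝓛)
  unfold BooleanRepresentable
  apply Set.Subset.antisymm
  · -- faces are transversals
    intro X hX
    rcases X.eq_empty_or_nonempty with rfl | ⟨p0, hp0⟩
    · exact BdAux.empty_tr
    have hXcard : X.card ≤ d + 1 := BdAux.card_le hX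
    by_cases hsmall : X.card ≤ d
    · -- small face: use the erase as the flat
      have hp0X : 1 ≤ X.card := Finset.card_pos.2 ⟨p0, hp0⟩
      refine BdAux.build hne (by omega) hp0 ?_ (Finset.Subset.refl _)
        (Finset.notMem_erase _ _)
      apply BdAux.flat_small hne
      have := Finset.card_erase_add_one hp0
      omega
    · -- face of maximal size: use the crux lemma
      have hXc : X.card = d + 1 := by omega
      obtain ⟨p, hpX, F, hF, hXF, hpF⟩ := BdAux.crux hd hV hcard hX hXc
      exact BdAux.build hne (by omega) hpX hF hXF hpF
  · exact BdAux.tr_subset hne
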